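/- Let q be a prime power and let n, k, δ be integers with 0 ≤ δ ≤ k ≤ n. Then C_q(n, k, k−δ) ≤ A_q(n, 2δ+2, k) + [n choose k−δ]_q − [k choose k−δ]_q · A_q(n, 2δ+2, k). -/

import Mathlib

open Module

/-- The Gaussian binomial coefficient `[n choose k]_q`, as a real number:
`∏_{i=0}^{k-1} (q^{n-i}-1)/(q^{k-i}-1)`. -/
noncomputable def gaussBinom (q n k : ℕ) : ℝ :=
  ∏ i ∈ Finset.range k, ((q : ℝ) ^ (n - i) - 1) / ((q : ℝ) ^ (k - i) - 1)

set_option linter.unusedSectionVars false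

section Aux

variable {F V : Type*} [Field F] [Fintype F] [AddCommGroup V] [Module F V] [FiniteDimensional F V]

/-- Linearly independent `r`-tuples whose span is `W` correspond to
linearly independent `r`-tuples in `W`. -/
noncomputable def fiberEquiv (r : ℕ) (W : Submodule F V) (hW : finrank F ↥W = r) :
    {s : {s : Fin r → V // LinearIndependent F s} //
        Submodule.span F (Set.range s.1) = W} ≃
    {t : Fin r → ↥W // LinearIndependent F t} where
  toFun s := ⟨fun i => ⟨s.1.1 i, by
      have := Submodule.subset_span (R := F) (Set.mem_range_self (f := s.1.1) i)
      rwa [s.2] at this⟩, by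
    have h : LinearIndependent F (W.subtype ∘ fun i => (⟨s.1.1 i, by
      have := Submodule.subset_span (R := F) (Set.mem_range_self (f := s.1.1) i)
      rwa [s.2] at this⟩ : ↥W)) := by
      convert s.1.2 using 1
      rfl
    exact LinearIndependent.of_comp W.subtype h⟩
  invFun t := ⟨⟨fun i => (t.1 i : V), (t.2.map' W.subtype W.ker_subtype : )⟩, by
    refine Submodule.eq_of_le_of_finrank_le ?_ ?_
    · rw [Submodule.span_le]; rintro _ ⟨i, rfl⟩; exact (t.1 i).2
    · have h2 := finrank_span_eq_card (t.2.map' W.subtype W.ker_subtype)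
      simp only [Fintype.card_fin] at h2
      rw [hW]
      exact le_of_eq h2.symm⟩
  left_inv s := by ext i; rfl
  right_inv t := by ext i; rfl

lemma card_grass (r : ℕ) (hr : r ≤ finrank F V) :
    Nat.card {W : Submodule F V // finrank F ↥W = r} *
      ∏ i : Fin r, (Fintype.card F ^ r - Fintype.card F ^ i.val)
      = ∏ i : Fin r, (Fintype.card F ^ finrank F V - Fintype.card F ^ i.val) := by
  have hfin : Finite V := Module.finite_of_finite F
  classical
  have : Fintype V := Fintype.ofFinite V
  have : Fintype (Submodule F V) := Fintype.ofFinite _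
  let φ : {s : Fin r → V // LinearIndependent F s} → {W : Submodule F V // finrank F ↥W = r} :=
    fun s => ⟨Submodule.span F (Set.range s.1), by
      rw [finrank_span_eq_card s.2, Fintype.card_fin]⟩
  have h1 : Fintype.card {s : Fin r → V // LinearIndependent F s}
      = ∑ W : {W : Submodule F V // finrank F ↥W = r}, Fintype.card {s // φ s = W} := by
    rw [Fintype.card_congr (Equiv.sigmaFiberEquiv φ).symm, Fintype.card_sigma]
  have h2 : ∀ W : {W : Submodule F V // finrank F ↥W = r},
      Fintype.card {s // φ s = W} = ∏ i : Fin r, (Fintype.card F ^ r - Fintype.card F ^ i.val) := by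
    intro W
    have e : {s // φ s = W} ≃ {t : Fin r → ↥W.1 // LinearIndependent F t} :=
      (Equiv.subtypeEquivRight (fun s => by
        simp only [φ, Subtype.ext_iff])).trans (fiberEquiv r W.1 W.2)
    rw [Fintype.card_congr e, ← Nat.card_eq_fintype_card,
      card_linearIndependent (K := F) (V := ↥W.1) (le_of_eq W.2.symm), W.2]
  have h3 : Nat.card {s : Fin r → V // LinearIndependent F s}
      = ∏ i : Fin r, (Fintype.card F ^ finrank F V - Fintype.card F ^ i.val) :=
    card_linearIndependent hr
  rw [Nat.card_eq_fintype_card] at h3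
  rw [Nat.card_eq_fintype_card]
  rw [h1] at h3
  simp only [h2, Finset.sum_const, Finset.card_univ, smul_eq_mul] at h3
  exact h3

lemma card_grass_real (r : ℕ) (hr : r ≤ finrank F V) :
    (Nat.card {W : Submodule F V // finrank F ↥W = r} : ℝ)
      = gaussBinom (Fintype.card F) (finrank F V) r := by
  have hq2 : 1 < Fintype.card F := Fintype.one_lt_card
  set q := Fintype.card F with hqdef
  set m := finrank F V with hmdef
  have hq1R : (1:ℝ) < (q : ℝ) := by exact_mod_cast hq2
  have hcast : ∀ j, r ≤ j → ((∏ i : Fin r, (q ^ j - q ^ i.val) : ℕ) : ℝ)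
      = ∏ i ∈ Finset.range r, ((q:ℝ) ^ j - (q:ℝ) ^ i) := by
    intro j hj
    rw [Fin.prod_univ_eq_prod_range (fun i => (q ^ j - q ^ i)) r, Nat.cast_prod]
    refine Finset.prod_congr rfl fun i hi => ?_
    rw [Nat.cast_sub (Nat.pow_le_pow_right (by omega)
      (le_trans (le_of_lt (Finset.mem_range.mp hi)) hj))]
    push_cast; ring
  have hDpos : ∀ i ∈ Finset.range r, (0:ℝ) < (q:ℝ) ^ r - (q:ℝ) ^ i := by
    intro i hi
    have : (q:ℝ) ^ i < (q:ℝ) ^ r := pow_lt_pow_right₀ hq1R (Finset.mem_range.mp hi)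
    linarith
  have hterm : ∀ i ∈ Finset.range r,
      ((q:ℝ) ^ (m - i) - 1) / ((q:ℝ) ^ (r - i) - 1) * ((q:ℝ) ^ r - (q:ℝ) ^ i)
        = (q:ℝ) ^ m - (q:ℝ) ^ i := by
    intro i hi
    have hi' := Finset.mem_range.mp hi
    have e1 : (q:ℝ) ^ r = (q:ℝ) ^ i * (q:ℝ) ^ (r - i) := by
      rw [← pow_add]; congr 1; omega
    have e2 : (q:ℝ) ^ m = (q:ℝ) ^ i * (q:ℝ) ^ (m - i) := by
      rw [← pow_add]; congr 1; omega
    have ha : (q:ℝ) ^ (r - i) - 1 ≠ 0 := by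
      have : (1:ℝ) < (q:ℝ) ^ (r - i) := one_lt_pow₀ hq1R (by omega)
      linarith
    rw [e1, e2]
    field_simp
  have hmain := card_grass (F := F) (V := V) r hr
  have hmainR : (Nat.card {W : Submodule F V // finrank F ↥W = r} : ℝ) *
      ∏ i ∈ Finset.range r, ((q:ℝ) ^ r - (q:ℝ) ^ i)
      = ∏ i ∈ Finset.range r, ((q:ℝ) ^ m - (q:ℝ) ^ i) := by
    rw [← hcast r le_rfl, ← hcast m hr, ← Nat.cast_mul, hmain]
  have hgauss : gaussBinom q m r * ∏ i ∈ Finset.range r, ((q:ℝ) ^ r - (q:ℝ) ^ i)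
      = ∏ i ∈ Finset.range r, ((q:ℝ) ^ m - (q:ℝ) ^ i) := by
    rw [gaussBinom, ← Finset.prod_mul_distrib]
    exact Finset.prod_congr rfl hterm
  have hDne : (∏ i ∈ Finset.range r, ((q:ℝ) ^ r - (q:ℝ) ^ i)) ≠ 0 :=
    ne_of_gt (Finset.prod_pos hDpos)
  exact mul_right_cancel₀ hDne (hmainR.trans hgauss.symm)

lemma exists_supmodule (d : ℕ) : ∀ W : Submodule F V, finrank F ↥W + d ≤ finrank F V →
    ∃ U, W ≤ U ∧ finrank F ↥U = finrank F ↥W + d := by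
  induction d with
  | zero => exact fun W _ => ⟨W, le_rfl, by simp⟩
  | succ d ih =>
    intro W hW
    have hlt : finrank F ↥W < finrank F V := by omega
    have hne : W ≠ ⊤ := fun h => by rw [h, finrank_top] at hlt; omega
    obtain ⟨x, hx⟩ : ∃ x, x ∉ W := by
      by_contra h; push_neg at h; exact hne (Submodule.eq_top_iff'.mpr h)
    have hx0 : x ≠ 0 := fun h => hx (h ▸ W.zero_mem)
    set W' := W ⊔ Submodule.span F {x} with hW'def
    have hxW' : x ∈ W' := Submodule.mem_sup_right (Submodule.mem_span_singleton_self x)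
    have hltW : W < W' := lt_of_le_not_ge le_sup_left (fun h => hx (h hxW'))
    have h1 : finrank F ↥W < finrank F ↥W' := Submodule.finrank_lt_finrank_of_lt hltW
    have h2 : finrank F ↥W' + finrank F ↥(W ⊓ Submodule.span F {x})
        = finrank F ↥W + finrank F ↥(Submodule.span F {x}) :=
      Submodule.finrank_sup_add_finrank_inf_eq W (Submodule.span F {x})
    rw [finrank_span_singleton hx0] at h2
    have h3 : finrank F ↥W' = finrank F ↥W + 1 := by omega
    obtain ⟨U, hU1, hU2⟩ := ih W' (by omega)
    exact ⟨U, le_trans hltW.le hU1, by omega⟩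

lemma exists_sup_finrank (W : Submodule F V) (k : ℕ) (hW : finrank F ↥W ≤ k)
    (hk : k ≤ finrank F V) : ∃ U, W ≤ U ∧ finrank F ↥U = k := by
  obtain ⟨U, h1, h2⟩ := exists_supmodule (k - finrank F ↥W) W (by omega)
  exact ⟨U, h1, by omega⟩

lemma card_le_sub (U : Submodule F V) (r : ℕ) :
    Nat.card {W : Submodule F V // finrank F ↥W = r ∧ W ≤ U}
      = Nat.card {W' : Submodule F ↥U // finrank F ↥W' = r} := by
  refine (Nat.card_congr ?_).symm
  refine (Equiv.subtypeEquiv (Submodule.MapSubtype.orderIso U).toEquiv (fun W' => ?_)).trans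
    ((Equiv.subtypeSubtypeEquivSubtypeInter _ _).trans (Equiv.subtypeEquivRight (fun W => by tauto)))
  rw [show (((Submodule.MapSubtype.orderIso U).toEquiv W' : {W : Submodule F V // W ≤ U}) : Submodule F V)
    = W'.map U.subtype from rfl, Submodule.finrank_map_subtype_eq]

end Aux

/-- `C` is a constant dimension code in the Grassmannian `G_q(n,k)` with
minimum subspace distance at least `d`: all its elements are `k`-dimensional
subspaces of `F^n`, and `d_S(U,V) = 2k - 2 dim(U ⊓ V) ≥ d` for distinct `U,V ∈ C`. -/
def IsGrassmannCode (F : Type) [Field F] (n k d : ℕ)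
    (C : Finset (Submodule F (Fin n → F))) : Prop :=
  (∀ U ∈ C, finrank F ↥U = k) ∧
  ∀ U ∈ C, ∀ V ∈ C, U ≠ V → d ≤ 2 * k - 2 * finrank F ↥(U ⊓ V)

/-- `A_q(n,d,k)`: the maximum size of an `(n,M,d,k)_q` code. -/
noncomputable def maxCodeSize (F : Type) [Field F] (n d k : ℕ) : ℕ :=
  sSup {M | ∃ C : Finset (Submodule F (Fin n → F)), IsGrassmannCode F n k d C ∧ C.card = M}

/-- `C` is a `q`-covering design `C_q(n,k,r)`: a set of `k`-dimensional subspaces of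
`F^n` such that every `r`-dimensional subspace is contained in at least one of them. -/
def IsCoveringDesign (F : Type) [Field F] (n k r : ℕ)
    (C : Finset (Submodule F (Fin n → F))) : Prop :=
  (∀ U ∈ C, finrank F ↥U = k) ∧
  ∀ W : Submodule F (Fin n → F), finrank F ↥W = r → ∃ U ∈ C, W ≤ U

/-- `𝒞_q(n,k,r)`: the minimum size of a `q`-covering design `C_q(n,k,r)`. -/
noncomputable def minCoverSize (F : Type) [Field F] (n k r : ℕ) : ℕ :=
  sInf {M | ∃ C : Finset (Submodule F (Fin n → F)), IsCoveringDesign F n k r C ∧ C.card = M}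

/-- `𝒞_q(n,k,k-δ) ≤ A_q(n,2δ+2,k) + [n choose k-δ]_q - [k choose k-δ]_q ⬝ A_q(n,2δ+2,k)`. -/
theorem cover_le_code (F : Type) [Field F] [Fintype F] (n k δ : ℕ)
    (hδk : δ ≤ k) (hkn : k ≤ n) :
    (minCoverSize F n k (k - δ) : ℝ) ≤
      (maxCodeSize F n (2 * δ + 2) k : ℝ) +
        gaussBinom (Fintype.card F) n (k - δ) -
        gaussBinom (Fintype.card F) k (k - δ) * (maxCodeSize F n (2 * δ + 2) k : ℝ) := by
  classical
  set q := Fintype.card F with hq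
  set r := k - δ with hrdef
  set A := maxCodeSize F n (2 * δ + 2) k with hA
  have hfinV : finrank F (Fin n → F) = n := by
    rw [Module.finrank_fintype_fun_eq_card, Fintype.card_fin]
  have hrk : r ≤ k := Nat.sub_le k δ
  have hrn : r ≤ n := le_trans hrk hkn
  have hkfin : k ≤ finrank F (Fin n → F) := by rw [hfinV]; exact hkn
  have : Fintype (Submodule F (Fin n → F)) := Fintype.ofFinite _
  have hmem : A ∈ {M | ∃ C : Finset (Submodule F (Fin n → F)),
      IsGrassmannCode F n k (2 * δ + 2) C ∧ C.card = M} := by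
    rw [hA, maxCodeSize]
    apply Nat.sSup_mem
    · exact ⟨0, ∅, ⟨fun U h => absurd h (Finset.notMem_empty U),
        fun U h => absurd h (Finset.notMem_empty U)⟩, Finset.card_empty⟩
    · exact ⟨Fintype.card (Submodule F (Fin n → F)),
        fun M ⟨C, _, hC⟩ => hC ▸ Finset.card_le_univ C⟩
  obtain ⟨C₀, hcode, hcard⟩ := hmem
  have hint : ∀ U ∈ C₀, ∀ U' ∈ C₀, U ≠ U' → finrank F ↥(U ⊓ U') < r := by
    intro U hU U' hU' hne
    have h1 := hcode.2 U hU U' hU' hne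
    have h2 : finrank F ↥(U ⊓ U') ≤ k := by
      rw [← hcode.1 U hU]; exact Submodule.finrank_mono inf_le_left
    omega
  set 𝒢 : Finset (Submodule F (Fin n → F)) :=
    Finset.univ.filter (fun W => finrank F ↥W = r) with h𝒢
  set cov : Finset (Submodule F (Fin n → F)) :=
    𝒢.filter (fun W => ∃ U ∈ C₀, W ≤ U) with hcov
  have hcovsub : cov ⊆ 𝒢 := Finset.filter_subset _ _
  have hGcard : (𝒢.card : ℝ) = gaussBinom q n r := by
    rw [h𝒢, ← Fintype.card_subtype, ← Nat.card_eq_fintype_card]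
    have := card_grass_real (F := F) (V := Fin n → F) r (by rw [hfinV]; exact hrn)
    rwa [hfinV] at this
  have hcoveq : cov = C₀.biUnion (fun U => 𝒢.filter (fun W => W ≤ U)) := by
    ext W
    simp only [hcov, Finset.mem_filter, Finset.mem_biUnion]
    tauto
  have hdisj : ∀ U ∈ C₀, ∀ U' ∈ C₀, U ≠ U' →
      Disjoint (𝒢.filter (fun W => W ≤ U)) (𝒢.filter (fun W => W ≤ U')) := by
    intro U hU U' hU' hne
    rw [Finset.disjoint_left]
    intro W hW hW'
    simp only [h𝒢, Finset.mem_filter, Finset.mem_univ, true_and] at hW hW'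
    have h3 : finrank F ↥W ≤ finrank F ↥(U ⊓ U') :=
      Submodule.finrank_mono (le_inf hW.2 hW'.2)
    have h4 := hint U hU U' hU' hne
    omega
  have hfil : ∀ U ∈ C₀, ((𝒢.filter (fun W => W ≤ U)).card : ℝ) = gaussBinom q k r := by
    intro U hU
    have e1 : (𝒢.filter (fun W => W ≤ U)).card
        = Nat.card {W : Submodule F (Fin n → F) // finrank F ↥W = r ∧ W ≤ U} := by
      rw [h𝒢, Finset.filter_filter, Nat.card_eq_fintype_card, Fintype.card_subtype]
    rw [e1, card_le_sub]
    have := card_grass_real (F := F) (V := ↥U) r (by rw [hcode.1 U hU]; exact hrk)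
    rwa [hcode.1 U hU] at this
  have hcovcard : (cov.card : ℝ) = (A : ℝ) * gaussBinom q k r := by
    rw [hcoveq, Finset.card_biUnion hdisj, Nat.cast_sum,
      Finset.sum_congr rfl hfil, Finset.sum_const, hcard, nsmul_eq_mul]
  let g : Submodule F (Fin n → F) → Submodule F (Fin n → F) :=
    fun W => if h : finrank F ↥W ≤ k then (exists_sup_finrank W k h hkfin).choose else ⊥
  have hg : ∀ W : Submodule F (Fin n → F), finrank F ↥W = r →
      W ≤ g W ∧ finrank F ↥(g W) = k := by
    intro W hW
    have h : finrank F ↥W ≤ k := by omega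
    have hgW : g W = (exists_sup_finrank W k h hkfin).choose := dif_pos h
    rw [hgW]
    exact (exists_sup_finrank W k h hkfin).choose_spec
  set D := C₀ ∪ (𝒢 \ cov).image g with hD
  have hdesign : IsCoveringDesign F n k r D := by
    constructor
    · intro U hU
      rw [hD, Finset.mem_union] at hU
      rcases hU with h | h
      · exact hcode.1 U h
      · obtain ⟨W, hW, rfl⟩ := Finset.mem_image.mp h
        have hWr : finrank F ↥W = r := by
          have := (Finset.mem_sdiff.mp hW).1
          simpa [h𝒢] using this
        exact (hg W hWr).2
    · intro W hW
      by_cases hc : ∃ U ∈ C₀, W ≤ U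
      · obtain ⟨U, hU, hle⟩ := hc
        exact ⟨U, Finset.mem_union_left _ hU, hle⟩
      · have hWG : W ∈ 𝒢 := by simp [h𝒢, hW]
        have hWu : W ∈ 𝒢 \ cov := Finset.mem_sdiff.mpr ⟨hWG, by
          rw [hcov, Finset.mem_filter]
          exact fun hmem => hc hmem.2⟩
        exact ⟨g W, Finset.mem_union_right _ (Finset.mem_image_of_mem g hWu), (hg W hW).1⟩
  have hmin : minCoverSize F n k r ≤ D.card := Nat.sInf_le ⟨D, hdesign, rfl⟩
  have hDcard : D.card ≤ A + (𝒢.card - cov.card) :=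
    calc D.card ≤ C₀.card + ((𝒢 \ cov).image g).card := Finset.card_union_le _ _
    _ ≤ A + (𝒢 \ cov).card := by
        rw [hcard]; exact Nat.add_le_add_left Finset.card_image_le A
    _ = A + (𝒢.card - cov.card) := by rw [Finset.card_sdiff_of_subset hcovsub]
  calc (minCoverSize F n k r : ℝ) ≤ (D.card : ℝ) := Nat.cast_le.mpr hmin
  _ ≤ (A : ℝ) + ((𝒢.card - cov.card : ℕ) : ℝ) := by exact_mod_cast hDcard
  _ = (A : ℝ) + ((𝒢.card : ℝ) - (cov.card : ℝ)) := by
      rw [Nat.cast_sub (Finset.card_le_card hcovsub)]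
  _ = (A : ℝ) + gaussBinom q n r - gaussBinom q k r * (A : ℝ) := by
      rw [hGcard, hcovcard]; ring
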